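/- Let w, u be words with |u| = m ≤ |w| = n and δ ≥ 0 an integer. Define a sequence by a_0 = m (position in w-window), b_0 = m (position in u), and iteratively h_k = max{ h : w-window suffix of length h ending at a_k equals suffix of u of length h ending at b_k }, with a_{k+1} = a_k − h_k − 1, b_{k+1} = b_k − h_k − 1 while b_k − h_k > 0. Then the number of completed iterations before reaching b = 0 equals d_H(u, w-window), and truncating the process after δ+1 mismatches computes min(δ+1, d_H(u, w-window)). -/

import Mathlib

/-- Hamming distance between equal-length words, as lists. -/
def hdist {σ : Type*} [DecidableEq σ] (u v : List σ) : ℕ :=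
  ((List.zip u v).filter fun p => p.1 ≠ p.2).length

/-- Length of the longest common prefix of two words. -/
def lcpLen {σ : Type*} [DecidableEq σ] : List σ → List σ → ℕ
  | a :: u, b :: v => if a = b then lcpLen u v + 1 else 0
  | _, _ => 0

/-- Length of the longest common suffix of two words. -/
def lcsLen {σ : Type*} [DecidableEq σ] (u v : List σ) : ℕ :=
  lcpLen u.reverse v.reverse

/-- The kangaroo-jump process: scan mismatches from right to left, jumping over the
longest common suffix in each iteration; count completed iterations. The first argument
is fuel bounding the number of iterations. -/
def kangaroo {σ : Type*} [DecidableEq σ] : ℕ → List σ → List σ → ℕ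
  | 0, _, _ => 0
  | fuel + 1, u, v =>
      if lcsLen u v = u.length then 0
      else 1 + kangaroo fuel (u.take (u.length - lcsLen u v - 1))
                             (v.take (v.length - lcsLen u v - 1))

/-- The kangaroo-jump process truncated after b counted mismatches. -/
def kangarooTr {σ : Type*} [DecidableEq σ] : ℕ → ℕ → List σ → List σ → ℕ
  | 0, _, _, _ => 0
  | fuel + 1, b, u, v =>
      if lcsLen u v = u.length then 0
      else if b ≤ 1 then 1
      else 1 + kangarooTr fuel (b - 1) (u.take (u.length - lcsLen u v - 1))
                                       (v.take (v.length - lcsLen u v - 1))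

section Aux

variable {σ : Type*} [DecidableEq σ]

lemma lcpLen_le_left : ∀ r s : List σ, lcpLen r s ≤ r.length
  | [], _ => by simp [lcpLen]
  | _ :: _, [] => by simp [lcpLen]
  | a :: r, b :: s => by
      by_cases h : a = b <;> simp [lcpLen, h]
      exact lcpLen_le_left r s

lemma lcpLen_eq_length : ∀ r s : List σ, r.length = s.length →
    lcpLen r s = r.length → r = s
  | [], [], _, _ => rfl
  | a :: r, b :: s, hl, h => by
      by_cases hab : a = b
      · subst hab
        simp [lcpLen] at h
        simp at hl
        rw [lcpLen_eq_length r s hl h]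
      · simp [lcpLen, hab] at h

lemma hdist_cons (a b : σ) (r s : List σ) :
    hdist (a :: r) (b :: s) = (if a = b then 0 else 1) + hdist r s := by
  by_cases h : a = b <;> simp [hdist, h] <;> omega

lemma hdist_self : ∀ u : List σ, hdist u u = 0
  | [] => rfl
  | a :: u => by rw [hdist_cons, if_pos rfl, hdist_self u]

/-- Key recursion for reversed lists. -/
lemma hdist_drop : ∀ r s : List σ, r.length = s.length →
    lcpLen r s < r.length →
    hdist r s = hdist (r.drop (lcpLen r s + 1)) (s.drop (lcpLen r s + 1)) + 1
  | [], _, _, h => by simp [lcpLen] at h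
  | _ :: _, [], hl, _ => by simp at hl
  | a :: r, b :: s, hl, h => by
      simp at hl
      by_cases hab : a = b
      · subst hab
        have hl2 : lcpLen (a :: r) (a :: s) = lcpLen r s + 1 := by simp [lcpLen]
        rw [hl2] at h ⊢
        simp only [List.length_cons] at h
        rw [List.drop_succ_cons, List.drop_succ_cons, hdist_cons, if_pos rfl,
          Nat.zero_add, hdist_drop r s hl (by omega)]
      · have hl2 : lcpLen (a :: r) (b :: s) = 0 := by simp [lcpLen, hab]
        rw [hl2]
        simp only [Nat.zero_add, List.drop_succ_cons, List.drop_zero]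
        rw [hdist_cons, if_neg hab]
        omega

lemma hdist_reverse : ∀ r s : List σ, r.length = s.length →
    hdist r.reverse s.reverse = hdist r s
  | [], [], _ => rfl
  | _ :: _, [], hl => by simp at hl
  | [], _ :: _, hl => by simp at hl
  | a :: r, b :: s, hl => by
      simp at hl
      have := hdist_reverse r s hl
      simp only [List.reverse_cons, hdist] at this ⊢
      rw [List.zip_append (by simp [hl]), List.filter_append,
        List.length_append, this]
      by_cases h : a = b <;> simp [List.zip_cons_cons, List.filter_cons, h] <;> omega

lemma take_eq_length {L : List σ} {k : ℕ} (h : k ≤ L.length) :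
    (L.take k).length = k := by simp [h]

/-- Main lemma for kangaroo. -/
lemma kangaroo_eq : ∀ fuel : ℕ, ∀ u v : List σ, u.length = v.length →
    u.length ≤ fuel → kangaroo fuel u v = hdist u v := by
  intro fuel
  induction fuel with
  | zero =>
    intro u v hl hf
    have : u = [] := List.eq_nil_of_length_eq_zero (by omega)
    have : v = [] := List.eq_nil_of_length_eq_zero (by omega)
    subst this; subst ‹u = []›
    rfl
  | succ fuel ih =>
    intro u v hl hf
    rw [kangaroo]
    set h := lcsLen u v with hh
    have hrl : u.reverse.length = v.reverse.length := by simp [hl]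
    by_cases heq : h = u.length
    · rw [if_pos heq]
      have : u.reverse = v.reverse :=
        lcpLen_eq_length _ _ hrl (by simpa [hh, lcsLen] using heq)
      have huv : u = v := by
        have := congrArg List.reverse this
        simpa using this
      subst huv
      exact (hdist_self u).symm
    · rw [if_neg heq]
      have hle : h ≤ u.length := by
        have := lcpLen_le_left u.reverse v.reverse
        simpa [lcsLen, hh] using this
      have hlt : h < u.length := lt_of_le_of_ne hle heq
      have hdd := hdist_drop u.reverse v.reverse hrl (by simpa [lcsLen, hh] using hlt)
      have hrev : hdist u v = hdist u.reverse v.reverse := (hdist_reverse u v hl).symm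
      have htake : (u.take (u.length - h - 1)).reverse = u.reverse.drop (h + 1) := by
        rw [List.reverse_take]
        congr 1
        omega
      have htakev : (v.take (v.length - h - 1)).reverse = v.reverse.drop (h + 1) := by
        rw [List.reverse_take]
        congr 1
        omega
      have hlen' : (u.take (u.length - h - 1)).length = (v.take (v.length - h - 1)).length := by
        simp [hl]
      have hrec := ih (u.take (u.length - h - 1)) (v.take (v.length - h - 1)) hlen'
        (by rw [take_eq_length (by omega)]; omega)
      rw [hrec]
      have : hdist (u.take (u.length - h - 1)) (v.take (v.length - h - 1)) =
          hdist (u.reverse.drop (h + 1)) (v.reverse.drop (h + 1)) := by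
        rw [← htake, ← htakev]
        exact (hdist_reverse _ _ (by simp [hl])).symm
      have hdef : lcpLen u.reverse v.reverse = h := rfl
      rw [hdef] at hdd
      omega

lemma hdist_pos_of_ne {u v : List σ} (hl : u.length = v.length)
    (hne : lcsLen u v ≠ u.length) : 1 ≤ hdist u v := by
  have hrl : u.reverse.length = v.reverse.length := by simp [hl]
  have hle : lcsLen u v ≤ u.length := by
    have := lcpLen_le_left u.reverse v.reverse
    simpa [lcsLen] using this
  have hlt : lcsLen u v < u.length := lt_of_le_of_ne hle hne
  have hdd := hdist_drop u.reverse v.reverse hrl (by simpa [lcsLen] using hlt)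
  have hrev : hdist u v = hdist u.reverse v.reverse := (hdist_reverse u v hl).symm
  omega

lemma kangarooTr_eq : ∀ fuel : ℕ, ∀ b : ℕ, ∀ u v : List σ, u.length = v.length →
    u.length ≤ fuel → 1 ≤ b → kangarooTr fuel b u v = min b (hdist u v) := by
  intro fuel
  induction fuel with
  | zero =>
    intro b u v hl hf hb
    have : u = [] := List.eq_nil_of_length_eq_zero (by omega)
    have : v = [] := List.eq_nil_of_length_eq_zero (by omega)
    subst this; subst ‹u = []›
    simp [kangarooTr, hdist]
  | succ fuel ih =>
    intro b u v hl hf hb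
    rw [kangarooTr]
    set h := lcsLen u v with hh
    by_cases heq : h = u.length
    · rw [if_pos heq]
      have hrl : u.reverse.length = v.reverse.length := by simp [hl]
      have : u.reverse = v.reverse :=
        lcpLen_eq_length _ _ hrl (by simpa [hh, lcsLen] using heq)
      have huv : u = v := by
        have := congrArg List.reverse this
        simpa using this
      subst huv
      simp [hdist_self]
    · rw [if_neg heq]
      have hpos : 1 ≤ hdist u v := hdist_pos_of_ne hl heq
      by_cases hb1 : b ≤ 1
      · rw [if_pos hb1]
        omega
      · rw [if_neg hb1]
        have hrl : u.reverse.length = v.reverse.length := by simp [hl]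
        have hle : h ≤ u.length := by
          have := lcpLen_le_left u.reverse v.reverse
          simpa [lcsLen, hh] using this
        have hlt : h < u.length := lt_of_le_of_ne hle heq
        have hdd := hdist_drop u.reverse v.reverse hrl (by simpa [lcsLen, hh] using hlt)
        have hrev : hdist u v = hdist u.reverse v.reverse := (hdist_reverse u v hl).symm
        have htake : (u.take (u.length - h - 1)).reverse = u.reverse.drop (h + 1) := by
          rw [List.reverse_take]; congr 1; omega
        have htakev : (v.take (v.length - h - 1)).reverse = v.reverse.drop (h + 1) := by
          rw [List.reverse_take]; congr 1; omega
        have hlen' : (u.take (u.length - h - 1)).length =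
            (v.take (v.length - h - 1)).length := by simp [hl]
        have hrec := ih (b - 1) (u.take (u.length - h - 1)) (v.take (v.length - h - 1))
          hlen' (by rw [take_eq_length (by omega)]; omega) (by omega)
        rw [hrec]
        have hdist' : hdist (u.take (u.length - h - 1)) (v.take (v.length - h - 1)) =
            hdist u v - 1 := by
          have : hdist (u.take (u.length - h - 1)) (v.take (v.length - h - 1)) =
              hdist (u.reverse.drop (h + 1)) (v.reverse.drop (h + 1)) := by
            rw [← htake, ← htakev]
            exact (hdist_reverse _ _ (by simp [hl])).symm
          have hdef : lcpLen u.reverse v.reverse = h := rfl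
          rw [hdef] at hdd
          omega
        rw [hdist']
        omega

end Aux

/-- Correctness of the kangaroo-jump technique on a window of w: the number of completed
iterations equals the Hamming distance between u and the window, and the process
truncated after δ+1 counted mismatches computes min(δ+1, d_H(u, window)). -/
theorem stmt19 {σ : Type*} [DecidableEq σ] (w u : List σ) (m n i δ : ℕ)
    (hm : u.length = m) (hn : w.length = n) (hmn : m ≤ n)
    (hi₁ : m ≤ i) (hi₂ : i ≤ n) :
    kangaroo m u ((w.drop (i - m)).take m) = hdist u ((w.drop (i - m)).take m) ∧
    kangarooTr m (δ + 1) u ((w.drop (i - m)).take m) =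
      min (δ + 1) (hdist u ((w.drop (i - m)).take m)) := by
  have hwin : ((w.drop (i - m)).take m).length = m := by
    simp [hn]
    omega
  constructor
  · exact kangaroo_eq m u _ (by rw [hm, hwin]) (le_of_eq hm)
  · exact kangarooTr_eq m (δ + 1) u _ (by rw [hm, hwin]) (le_of_eq hm) (by omega)
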